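/- For every real ζ > 0, one has e^{2√(2/π)·ζ} < Φ(ζ) / (1 - Φ(ζ)), where Φ is the standard normal cumulative distribution function. -/

import Mathlib

open MeasureTheory ProbabilityTheory

/-- The standard normal cumulative distribution function. -/
noncomputable def stdNormalCDF (s : ℝ) : ℝ := (gaussianReal 0 1 (Set.Iic s)).toReal

open Real Set

noncomputable def phiR (t : ℝ) : ℝ := (Real.sqrt (2*Real.pi))⁻¹ * Real.exp (-t^2/2)

lemma phiR_eq : phiR = gaussianPDFReal 0 1 := by
  funext x
  simp only [phiR, gaussianPDFReal, NNReal.coe_one, mul_one, sub_zero]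

lemma phiR_pos (t : ℝ) : 0 < phiR t := by
  have := Real.pi_pos
  unfold phiR
  positivity

lemma integrable_phiR : Integrable phiR := phiR_eq ▸ integrable_gaussianPDFReal 0 1

lemma continuous_phiR : Continuous phiR := by unfold phiR; fun_prop

lemma stdNormalCDF_eq (s : ℝ) : stdNormalCDF s = ∫ x in Iic s, phiR x := by
  rw [stdNormalCDF, gaussianReal_apply_eq_integral 0 one_ne_zero,
    ENNReal.toReal_ofReal (integral_nonneg fun x => gaussianPDFReal_nonneg 0 1 x), phiR_eq]

lemma integral_phiR : ∫ x, phiR x = 1 := phiR_eq ▸ integral_gaussianPDFReal_eq_one 0 one_ne_zero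

lemma stdNormalCDF_zero : stdNormalCDF 0 = 1/2 := by
  have h1 : ∫ x in Iic (0:ℝ), phiR x = ∫ x in Ioi (0:ℝ), phiR x := by
    have := integral_comp_neg_Iic (0:ℝ) phiR
    rw [neg_zero] at this
    rw [← this]
    congr 1
    funext x
    simp [phiR, neg_pow]
  have h2 : (∫ x in Iic (0:ℝ), phiR x) + ∫ x in Ioi (0:ℝ), phiR x = 1 := by
    have := MeasureTheory.integral_add_compl (measurableSet_Iic (a := (0:ℝ))) integrable_phiR
    rwa [compl_Iic, integral_phiR] at this
  rw [stdNormalCDF_eq]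
  linarith

lemma tendsto_stdNormalCDF : Filter.Tendsto stdNormalCDF Filter.atTop (nhds 1) := by
  have h := MeasureTheory.tendsto_measure_Iic_atTop (μ := gaussianReal 0 1)
  rw [show (gaussianReal 0 1 univ) = 1 from measure_univ] at h
  have := (ENNReal.tendsto_toReal (by norm_num : (1:ENNReal) ≠ ⊤)).comp h
  exact this

lemma hasDerivAt_stdNormalCDF (x : ℝ) : HasDerivAt stdNormalCDF (phiR x) x := by
  have key : ∀ y : ℝ, stdNormalCDF y = stdNormalCDF 0 + ∫ t in (0:ℝ)..y, phiR t := by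
    intro y
    rw [stdNormalCDF_eq, stdNormalCDF_eq,
      ← intervalIntegral.integral_Iic_sub_Iic integrable_phiR.integrableOn
        integrable_phiR.integrableOn]
    ring
  have hd : HasDerivAt (fun y => stdNormalCDF 0 + ∫ t in (0:ℝ)..y, phiR t) (phiR x) x := by
    refine HasDerivAt.const_add _ ?_
    exact intervalIntegral.integral_hasDerivAt_right
      (integrable_phiR.intervalIntegrable)
      (continuous_phiR.aestronglyMeasurable.stronglyMeasurableAtFilter)
      continuous_phiR.continuousAt
  exact (Filter.EventuallyEq.hasDerivAt_iff (Filter.Eventually.of_forall key)).mpr hd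

noncomputable def cK : ℝ := 2 * Real.sqrt (2/Real.pi)

lemma cK_pos : 0 < cK := by
  have := Real.pi_pos
  unfold cK
  positivity

lemma cK_sq : cK^2 = 8/Real.pi := by
  have hπ := Real.pi_pos
  rw [cK, mul_pow, Real.sq_sqrt (by positivity)]
  ring

lemma cK_sqrt : cK * Real.sqrt (2*Real.pi) = 4 := by
  have hπ := Real.pi_pos
  rw [cK, mul_assoc, ← Real.sqrt_mul (by positivity)]
  rw [show (2/Real.pi) * (2*Real.pi) = 4 by field_simp; ring]
  rw [show (4:ℝ) = 2^2 by norm_num, Real.sqrt_sq (by norm_num)]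
  norm_num

noncomputable def LgR (x : ℝ) : ℝ := (1 + Real.exp (-x))⁻¹

noncomputable def LdR (x : ℝ) : ℝ := Real.exp (-x) / (1 + Real.exp (-x))^2

lemma one_add_exp_pos (x : ℝ) : 0 < 1 + Real.exp (-x) := by positivity

lemma hasDerivAt_LgR (x : ℝ) : HasDerivAt LgR (LdR x) x := by
  have h1 : HasDerivAt (fun y : ℝ => 1 + Real.exp (-y)) (-Real.exp (-x)) x := by
    simpa using ((Real.hasDerivAt_exp (-x)).comp x (hasDerivAt_neg x)).const_add 1
  have := h1.inv (ne_of_gt (one_add_exp_pos x))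
  refine HasDerivAt.congr_deriv (f := LgR) this (Eq.symm ?_)
  rw [LdR]
  field_simp

lemma LgR_zero : LgR 0 = 1/2 := by norm_num [LgR]

lemma tendsto_LgR : Filter.Tendsto (fun t : ℝ => LgR (cK * t)) Filter.atTop (nhds 1) := by
  have h1 : Filter.Tendsto (fun t : ℝ => -(cK * t)) Filter.atTop Filter.atBot := by
    refine Filter.tendsto_neg_atBot_iff.mpr ?_
    exact Filter.Tendsto.const_mul_atTop cK_pos Filter.tendsto_id
  have h2 := Real.tendsto_exp_atBot.comp h1
  have h3 : Filter.Tendsto (fun t : ℝ => 1 + Real.exp (-(cK * t))) Filter.atTop (nhds 1) := by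
    simpa using h2.const_add 1
  simpa [LgR] using (h3.inv₀ (by norm_num))

-- Ld in cosh form
lemma LdR_cosh (x : ℝ) : LdR x = (4 * Real.cosh (x/2)^2)⁻¹ := by
  have key : 1 + Real.exp (-x) = Real.exp (-x/2) * (2 * Real.cosh (x/2)) := by
    rw [Real.cosh_eq]
    rw [mul_comm (2:ℝ), div_mul_cancel₀ _ (two_ne_zero), mul_add,
      ← Real.exp_add, ← Real.exp_add]
    rw [show -x/2 + x/2 = 0 by ring, show -x/2 + -(x/2) = -x by ring, Real.exp_zero]
  rw [LdR, key, mul_pow, ← Real.exp_nat_mul]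
  have h : Real.exp ((2:ℕ) * (-x/2)) = Real.exp (-x) := by norm_num; ring_nf
  rw [h]
  have hc := Real.cosh_pos (x/2)
  have he := Real.exp_pos (-x)
  field_simp
  ring

noncomputable def GR (t : ℝ) : ℝ := stdNormalCDF t - LgR (cK * t)

noncomputable def gdR (t : ℝ) : ℝ := phiR t - cK * LdR (cK * t)

lemma hasDerivAt_GR (t : ℝ) : HasDerivAt GR (gdR t) t := by
  have h0 : HasDerivAt (fun y : ℝ => cK * y) cK t := by
    simpa using (hasDerivAt_id t).const_mul cK
  have h1 : HasDerivAt (fun s => LgR (cK * s)) (LdR (cK * t) * cK) t :=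
    (hasDerivAt_LgR (cK * t)).comp t h0
  have h2 := (hasDerivAt_stdNormalCDF t).sub h1
  have e : gdR t = phiR t - LdR (cK * t) * cK := by rw [gdR]; ring
  exact e ▸ h2

lemma GR_zero : GR 0 = 0 := by simp [GR, stdNormalCDF_zero, LgR_zero]

lemma tendsto_GR : Filter.Tendsto GR Filter.atTop (nhds 0) := by
  have h : Filter.Tendsto GR Filter.atTop (nhds (1 - 1)) := tendsto_stdNormalCDF.sub tendsto_LgR
  rwa [sub_self] at h

noncomputable def uR (t : ℝ) : ℝ := Real.log (Real.cosh (cK*t/2)) - t^2/4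

lemma sqrt_two_pi_pos : (0:ℝ) < Real.sqrt (2*Real.pi) := by
  have := Real.pi_pos; positivity

lemma gdR_eq (t : ℝ) :
    gdR t = (Real.sqrt (2*Real.pi))⁻¹ * (Real.exp (-t^2/2) - (Real.cosh (cK*t/2)^2)⁻¹) := by
  have hs := sqrt_two_pi_pos
  have hc := Real.cosh_pos (cK*t/2)
  have h4 : cK * (4 * Real.cosh (cK*t/2)^2)⁻¹
      = (Real.sqrt (2*Real.pi))⁻¹ * (Real.cosh (cK*t/2)^2)⁻¹ := by
    have h := cK_sqrt
    set S := Real.sqrt (2*Real.pi) with hS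
    field_simp
    nlinarith [sq_nonneg (Real.cosh (cK*t/2))]
  rw [gdR, LdR_cosh, show cK * t / 2 = cK*t/2 from rfl, h4, phiR]
  ring

lemma cosh_sq_gt {t : ℝ} (h : 0 < uR t) :
    Real.exp (t^2/2) < Real.cosh (cK*t/2)^2 := by
  have hc := Real.cosh_pos (cK*t/2)
  have h1 : Real.exp (t^2/4) < Real.cosh (cK*t/2) := by
    calc Real.exp (t^2/4) < Real.exp (Real.log (Real.cosh (cK*t/2))) :=
          Real.exp_lt_exp.mpr (by unfold uR at h; linarith)
      _ = Real.cosh (cK*t/2) := Real.exp_log hc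
  have h2 := mul_lt_mul'' h1 h1 (Real.exp_pos _).le (Real.exp_pos _).le
  rw [← Real.exp_add, show t^2/4 + t^2/4 = t^2/2 by ring] at h2
  rw [pow_two (Real.cosh (cK*t/2))]; exact h2

lemma cosh_sq_lt {t : ℝ} (h : uR t < 0) :
    Real.cosh (cK*t/2)^2 < Real.exp (t^2/2) := by
  have hc := Real.cosh_pos (cK*t/2)
  have h1 : Real.cosh (cK*t/2) < Real.exp (t^2/4) := by
    calc Real.cosh (cK*t/2) = Real.exp (Real.log (Real.cosh (cK*t/2))) :=
          (Real.exp_log hc).symm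
      _ < Real.exp (t^2/4) := Real.exp_lt_exp.mpr (by unfold uR at h; linarith)
  have h2 := mul_lt_mul'' h1 h1 hc.le hc.le
  rw [← Real.exp_add, show t^2/4 + t^2/4 = t^2/2 by ring] at h2
  rw [pow_two (Real.cosh (cK*t/2))]; exact h2

lemma gdR_pos {t : ℝ} (h : 0 < uR t) : 0 < gdR t := by
  have hc := Real.cosh_pos (cK*t/2)
  have h2 := cosh_sq_gt h
  have h3 : (Real.cosh (cK*t/2)^2)⁻¹ < Real.exp (-t^2/2) := by
    rw [show -t^2/2 = -(t^2/2) by ring, Real.exp_neg]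
    exact inv_strictAnti₀ (Real.exp_pos _) h2
  rw [gdR_eq]
  exact mul_pos (inv_pos.mpr sqrt_two_pi_pos) (by linarith)

lemma gdR_neg {t : ℝ} (h : uR t < 0) : gdR t < 0 := by
  have hc := Real.cosh_pos (cK*t/2)
  have h2 := cosh_sq_lt h
  have h3 : Real.exp (-t^2/2) < (Real.cosh (cK*t/2)^2)⁻¹ := by
    rw [show -t^2/2 = -(t^2/2) by ring, Real.exp_neg]
    exact inv_strictAnti₀ (by positivity) h2
  rw [gdR_eq]
  exact mul_neg_of_pos_of_neg (inv_pos.mpr sqrt_two_pi_pos) (by linarith)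

noncomputable def vR (t : ℝ) : ℝ := cK * (Real.sinh (cK*t/2) / Real.cosh (cK*t/2)) - t

noncomputable def vdR (t : ℝ) : ℝ := cK^2/2 * (Real.cosh (cK*t/2)^2)⁻¹ - 1

lemma hasDerivAt_inner (t : ℝ) : HasDerivAt (fun s : ℝ => cK*s/2) (cK/2) t := by
  simpa using ((hasDerivAt_id t).const_mul cK).div_const 2

lemma hasDerivAt_vR (t : ℝ) : HasDerivAt vR (vdR t) t := by
  have hc := Real.cosh_pos (cK*t/2)
  have hs := (hasDerivAt_inner t).sinh
  have hch := (hasDerivAt_inner t).cosh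
  have hdiv := hs.div hch hc.ne'
  have hq := (hdiv.const_mul cK).sub (hasDerivAt_id t)
  refine HasDerivAt.congr_deriv (f := vR) hq (Eq.symm ?_)
  have hsq : Real.cosh (cK*t/2)^2 - Real.sinh (cK*t/2)^2 = 1 :=
    Real.cosh_sq_sub_sinh_sq _
  rw [vdR]
  field_simp
  nlinarith [cK_sq, Real.pi_pos]

lemma hasDerivAt_uR (t : ℝ) : HasDerivAt uR (vR t / 2) t := by
  have hc := Real.cosh_pos (cK*t/2)
  have hlog := ((hasDerivAt_inner t).cosh).log hc.ne'
  have hq := hlog.sub (((hasDerivAt_id t).mul (hasDerivAt_id t)).div_const 4)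
  have e : HasDerivAt (fun s : ℝ => Real.log (Real.cosh (cK*s/2)) - s*s/4)
      (Real.sinh (cK*t/2) * (cK/2) / Real.cosh (cK*t/2) - (1*t + t*1)/4) t := hq
  have e2 : uR = fun s : ℝ => Real.log (Real.cosh (cK*s/2)) - s*s/4 := by
    funext s; rw [uR]; ring_nf
  rw [e2]
  convert e using 1
  rw [vR]
  field_simp
  ring

lemma vR_zero : vR 0 = 0 := by simp [vR]

lemma uR_zero : uR 0 = 0 := by simp [uR]

lemma vdR_anti {x y : ℝ} (hx : 0 ≤ x) (hxy : x < y) : vdR y < vdR x := by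
  have h1 : Real.cosh (cK*x/2) < Real.cosh (cK*y/2) := by
    apply Real.cosh_strictMonoOn
    · exact mem_Ici.mpr (by nlinarith [cK_pos])
    · exact mem_Ici.mpr (by nlinarith [cK_pos])
    · nlinarith [mul_pos cK_pos (sub_pos.mpr hxy)]
  have hcx := Real.cosh_pos (cK*x/2)
  have hcy := Real.cosh_pos (cK*y/2)
  have h2 : Real.cosh (cK*x/2)^2 < Real.cosh (cK*y/2)^2 := by nlinarith
  have h3 : (Real.cosh (cK*y/2)^2)⁻¹ < (Real.cosh (cK*x/2)^2)⁻¹ :=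
    inv_strictAnti₀ (by positivity) h2
  have hck2 : 0 < cK^2/2 := div_pos (pow_pos cK_pos 2) two_pos
  rw [vdR, vdR]
  nlinarith

/-- Generic single-crossing lemma. -/
lemma cross {f fd : ℝ → ℝ} (hf : ∀ t, HasDerivAt f (fd t) t) (h0 : f 0 = 0)
    (hsign : ∀ ξ s, 0 < ξ → fd ξ ≤ 0 → ξ < s → fd s < 0)
    {a b : ℝ} (ha : 0 < a) (hab : a < b) (hfa : f a ≤ 0) : f b < 0 := by
  obtain ⟨ξ, hξ, hslope⟩ := exists_hasDerivAt_eq_slope f fd ha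
    (fun t _ => (hf t).continuousAt.continuousWithinAt) (fun t _ => hf t)

  have hfdξ : fd ξ ≤ 0 := by
    rw [hslope, h0, sub_zero, sub_zero]
    exact div_nonpos_of_nonpos_of_nonneg hfa ha.le
  have hanti : StrictAntiOn f (Ici ξ) := by
    refine strictAntiOn_of_deriv_neg (convex_Ici ξ)
      (fun t _ => (hf t).continuousAt.continuousWithinAt) (fun s hs => ?_)
    rw [interior_Ici] at hs
    rw [(hf s).deriv]
    exact hsign ξ s hξ.1 hfdξ hs
  have := hanti (mem_Ici.mpr hξ.2.le) (mem_Ici.mpr (hξ.2.le.trans hab.le)) hab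
  linarith

lemma vR_cross {a b : ℝ} (ha : 0 < a) (hab : a < b) (hva : vR a ≤ 0) : vR b < 0 :=
  cross hasDerivAt_vR vR_zero
    (fun _ξ _s hξ hd hlt => lt_of_lt_of_le (vdR_anti hξ.le hlt) hd) ha hab hva

lemma uR_cross {a b : ℝ} (ha : 0 < a) (hab : a < b) (hua : uR a ≤ 0) : uR b < 0 :=
  cross hasDerivAt_uR uR_zero
    (fun ξ _s hξ hd hlt => by
      have : vR ξ ≤ 0 := by linarith
      have := vR_cross hξ hlt this
      linarith) ha hab hua

lemma continuous_GR : Continuous GR :=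
  continuous_iff_continuousAt.mpr fun t => (hasDerivAt_GR t).continuousAt

lemma GR_pos {ζ : ℝ} (hζ : 0 < ζ) : 0 < GR ζ := by
  by_cases hall : ∀ t ∈ Ioo (0:ℝ) ζ, 0 < uR t
  · have hmono : StrictMonoOn GR (Icc 0 ζ) := by
      refine strictMonoOn_of_deriv_pos (convex_Icc 0 ζ) continuous_GR.continuousOn
        (fun t ht => ?_)
      rw [interior_Icc] at ht
      rw [(hasDerivAt_GR t).deriv]
      exact gdR_pos (hall t ht)
    have := hmono (Set.left_mem_Icc.mpr hζ.le) (Set.right_mem_Icc.mpr hζ.le) hζ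
    rwa [GR_zero] at this
  · push_neg at hall
    obtain ⟨a, ha, hua⟩ := hall
    have hgneg : ∀ s, a < s → gdR s < 0 := fun s hs =>
      gdR_neg (uR_cross ha.1 hs hua)
    have hanti : StrictAntiOn GR (Ici a) := by
      refine strictAntiOn_of_deriv_neg (convex_Ici a) continuous_GR.continuousOn
        (fun s hs => ?_)
      rw [interior_Ici] at hs
      rw [(hasDerivAt_GR s).deriv]
      exact hgneg s hs
    have haζ : a ≤ ζ := ha.2.le
    have h1 : 0 ≤ GR (ζ+1) := by
      refine le_of_tendsto tendsto_GR ?_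
      filter_upwards [Filter.eventually_ge_atTop (ζ+1)] with t ht
      rcases eq_or_lt_of_le ht with h | h
      · rw [← h]
      · exact (hanti (mem_Ici.mpr (by linarith)) (mem_Ici.mpr (by linarith)) h).le
    have h2 : GR (ζ+1) < GR ζ :=
      hanti (mem_Ici.mpr haζ) (mem_Ici.mpr (by linarith)) (by linarith)
    linarith

lemma one_sub_cdf_pos (ζ : ℝ) : 0 < 1 - stdNormalCDF ζ := by
  have htot : (∫ x in Iic ζ, phiR x) + ∫ x in Ioi ζ, phiR x = 1 := by
    have := MeasureTheory.integral_add_compl (measurableSet_Iic (a := ζ)) integrable_phiR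
    rwa [compl_Iic, integral_phiR] at this
  have h1 : 0 < ∫ x in Ioc ζ (ζ+1), phiR x := by
    rw [← intervalIntegral.integral_of_le (by linarith)]
    exact intervalIntegral.intervalIntegral_pos_of_pos_on
      integrable_phiR.intervalIntegrable (fun x _ => phiR_pos x) (by linarith)
  have h2 : (∫ x in Ioc ζ (ζ+1), phiR x) ≤ ∫ x in Ioi ζ, phiR x := by
    refine MeasureTheory.setIntegral_mono_set integrable_phiR.integrableOn
      (Filter.Eventually.of_forall fun x => (phiR_pos x).le) ?_
    exact HasSubset.Subset.eventuallyLE Ioc_subset_Ioi_self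
  rw [stdNormalCDF_eq]
  linarith

/-- For every `ζ > 0`, `e^{2√(2/π) ζ} < Φ(ζ)/(1 - Φ(ζ))`. -/
theorem stmt_12 (ζ : ℝ) (hζ : 0 < ζ) :
    Real.exp (2 * Real.sqrt (2 / Real.pi) * ζ) < stdNormalCDF ζ / (1 - stdNormalCDF ζ) := by
  have hG := GR_pos hζ
  rw [GR, LgR] at hG
  have hpos := one_sub_cdf_pos ζ
  set Φ := stdNormalCDF ζ with hΦdef
  set E := Real.exp (-(cK*ζ)) with hEdef
  have hE : 0 < E := Real.exp_pos _
  have hL : (1+E)⁻¹ < Φ := by linarith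
  have h1 : 1 < (1+E)*Φ := by
    have := mul_lt_mul_of_pos_left hL (by positivity : (0:ℝ) < 1+E)
    rwa [mul_inv_cancel₀ (by positivity)] at this
  have hexp : Real.exp (cK*ζ) = E⁻¹ := by rw [hEdef, Real.exp_neg, inv_inv]
  have hgoal : Real.exp (cK*ζ) < Φ / (1-Φ) := by
    rw [hexp, lt_div_iff₀ hpos, inv_mul_lt_iff₀ hE]
    nlinarith
  exact hgoal
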